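/- The following are equivalent: (i) there exist a ≠ 0 and b ∈ ℝ such that the p-harmonic function x ↦ b + a·U(x) is bounded on ℝ; (ii) there exists a ≠ 0 such that x ↦ a·U(x) has finite p-energy on ℝ, i.e. ∫_{−∞}^{∞} |a·w(t)^{1/(1-p)}|^p w(t) dt < ∞; (iii) ∫_{−∞}^{∞} w(t)^{1/(1-p)} dt < ∞. (This is the concrete form, via the explicit description of p-harmonic functions on the weighted line, of the equivalence of the bounded and finite-energy Liouville theorems for p-harmonic functions on (ℝ, w dx).) -/

import Mathlib

open MeasureTheory Set

/-- Equivalence of the bounded and finite-energy Liouville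
theorems for `p`-harmonic functions on the weighted real line `(ℝ, w dx)`:
(i) some nonconstant `p`-harmonic function `x ↦ b + a·U(x)` (with `a ≠ 0`)
is bounded on `ℝ`; (ii) some `x ↦ a·U(x)` with `a ≠ 0` has finite
`p`-energy `∫_ℝ |a·w^{1/(1-p)}|^p w dt < ∞`; (iii) `∫_ℝ w^{1/(1-p)} dt < ∞`. -/
theorem stmt_7 (p : ℝ) (hp : 1 < p) (w : ℝ → ℝ)
    (hw_meas : Measurable w)
    (hw_pos : ∀ᵐ t ∂(volume : Measure ℝ), 0 < w t)
    (hloc : LocallyIntegrable (fun t => w t ^ (1 / (1 - p))))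
    (U : ℝ → ℝ)
    (hU : ∀ x : ℝ, U x = ∫ t in (0 : ℝ)..x, w t ^ (1 / (1 - p))) :
    ((∃ a b : ℝ, a ≠ 0 ∧ ∃ M : ℝ, ∀ x : ℝ, |b + a * U x| ≤ M)
        ↔ (∫⁻ t : ℝ, ENNReal.ofReal (w t ^ (1 / (1 - p)))) < ⊤)
      ∧ ((∃ a : ℝ, a ≠ 0 ∧
            (∫⁻ t : ℝ, ENNReal.ofReal (|a * w t ^ (1 / (1 - p))| ^ p * w t)) < ⊤)
        ↔ (∫⁻ t : ℝ, ENNReal.ofReal (w t ^ (1 / (1 - p)))) < ⊤) := by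
  set f : ℝ → ℝ := fun t => w t ^ (1 / (1 - p)) with hfdef
  have hf_meas : Measurable f := by measurability
  have hf_pos : ∀ᵐ t ∂(volume : Measure ℝ), 0 < f t :=
    hw_pos.mono fun t ht => Real.rpow_pos_of_pos ht _
  have hf_nn : 0 ≤ᵐ[volume] f := hf_pos.mono fun t ht => ht.le
  have key : (∫⁻ t, ENNReal.ofReal (f t)) < ⊤ ↔ Integrable f := by
    constructor
    · intro h
      refine ⟨hf_meas.aestronglyMeasurable, ?_⟩
      rwa [hasFiniteIntegral_iff_ofReal hf_nn]
    · intro h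
      rw [← hasFiniteIntegral_iff_ofReal hf_nn]
      exact h.2
  have hII : ∀ a b : ℝ, IntervalIntegrable f volume a b := fun a b =>
    (hloc.integrableOn_isCompact isCompact_uIcc).intervalIntegrable
  constructor
  · constructor
    · rintro ⟨a, b, ha, M, hM⟩
      set C : ℝ := (M + |b|) / |a| with hC
      have hUb : ∀ x : ℝ, |U x| ≤ C := by
        intro x
        have h1 : |a| * |U x| ≤ M + |b| := by
          have e : a * U x = (b + a * U x) - b := by ring
          calc |a| * |U x| = |a * U x| := (abs_mul _ _).symm
          _ = |(b + a * U x) - b| := by rw [← e]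
          _ ≤ |b + a * U x| + |b| := abs_sub _ _
          _ ≤ M + |b| := by linarith [hM x]
        rw [hC, le_div_iff₀ (abs_pos.mpr ha)]
        linarith [mul_comm |a| |U x|]
      have hint : Integrable f := by
        apply integrable_of_intervalIntegral_norm_bounded (μ := volume)
          (l := Filter.atTop) (a := fun n : ℕ => (-(n : ℝ))) (b := fun n : ℕ => (n : ℝ)) (2 * C)
        · intro n
          exact (hloc.integrableOn_isCompact isCompact_Icc).mono_set Ioc_subset_Icc_self
        · exact Filter.tendsto_neg_atTop_atBot.comp tendsto_natCast_atTop_atTop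
        · exact tendsto_natCast_atTop_atTop
        · filter_upwards with n
          have heq : (∫ x in (-(n : ℝ))..(n : ℝ), ‖f x‖) = ∫ x in (-(n : ℝ))..(n : ℝ), f x := by
            apply intervalIntegral.integral_congr_ae
            filter_upwards [hf_nn] with t ht _
            exact Real.norm_of_nonneg ht
          have hsub : (∫ x in (-(n : ℝ))..(n : ℝ), f x) = U n - U (-(n : ℝ)) := by
            rw [hU, hU]
            exact (intervalIntegral.integral_interval_sub_left (hII 0 n) (hII 0 (-n))).symm
          rw [heq, hsub]
          linarith [abs_le.mp (hUb (n : ℝ)), abs_le.mp (hUb (-(n : ℝ)))]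
      exact key.mpr hint
    · intro h
      have hint : Integrable f := key.mp h
      refine ⟨1, 0, one_ne_zero, ∫ t, ‖f t‖, fun x => ?_⟩
      have h2 : |∫ t in (0 : ℝ)..x, f t| ≤ ∫ t, ‖f t‖ := by
        calc |∫ t in (0 : ℝ)..x, f t| = ‖∫ t in (0 : ℝ)..x, f t‖ := (Real.norm_eq_abs _).symm
        _ ≤ ∫ t in Set.uIoc (0 : ℝ) x, ‖f t‖ := intervalIntegral.norm_integral_le_integral_norm_uIoc
        _ ≤ ∫ t, ‖f t‖ := by
            apply setIntegral_le_integral hint.norm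
            filter_upwards with t using norm_nonneg _
      simpa [hU x] using h2
  · have hne : (1 : ℝ) - p ≠ 0 := by intro h0; linarith
    have hexp : 1 / (1 - p) * p + 1 = 1 / (1 - p) := by field_simp; ring
    have hident : ∀ a : ℝ, ∀ᵐ t ∂(volume : Measure ℝ),
        |a * f t| ^ p * w t = |a| ^ p * f t := by
      intro a
      filter_upwards [hw_pos] with t hwt
      have hft : 0 < f t := Real.rpow_pos_of_pos hwt _
      have h1 : |a * f t| = |a| * f t := by rw [abs_mul, abs_of_pos hft]
      have h2 : (|a| * f t) ^ p = |a| ^ p * f t ^ p := Real.mul_rpow (abs_nonneg a) hft.le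
      have h3 : f t ^ p * w t = f t := by
        show (w t ^ (1 / (1 - p))) ^ p * w t = w t ^ (1 / (1 - p))
        calc (w t ^ (1 / (1 - p))) ^ p * w t
            = w t ^ (1 / (1 - p) * p) * w t ^ (1 : ℝ) := by
              rw [← Real.rpow_mul hwt.le, Real.rpow_one]
        _ = w t ^ (1 / (1 - p) * p + 1) := (Real.rpow_add hwt _ _).symm
        _ = w t ^ (1 / (1 - p)) := by rw [hexp]
      rw [h1, h2, mul_assoc, h3]
    have hlin : ∀ a : ℝ, (∫⁻ t, ENNReal.ofReal (|a * f t| ^ p * w t))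
        = ENNReal.ofReal (|a| ^ p) * ∫⁻ t, ENNReal.ofReal (f t) := by
      intro a
      rw [← lintegral_const_mul' _ _ ENNReal.ofReal_ne_top]
      apply lintegral_congr_ae
      filter_upwards [hident a, hf_nn] with t ht htn
      rw [ht, ENNReal.ofReal_mul (by positivity)]
    constructor
    · rintro ⟨a, ha, hfin⟩
      rw [hlin a] at hfin
      have hc : ENNReal.ofReal (|a| ^ p) ≠ 0 := by
        simp only [ne_eq, ENNReal.ofReal_eq_zero, not_le]
        exact Real.rpow_pos_of_pos (abs_pos.mpr ha) _
      by_contra h'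
      rw [not_lt, top_le_iff] at h'
      rw [h', ENNReal.mul_top hc] at hfin
      exact absurd hfin (lt_irrefl _)
    · intro h
      refine ⟨1, one_ne_zero, ?_⟩
      rw [hlin 1]
      exact ENNReal.mul_lt_top ENNReal.ofReal_lt_top h
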